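/- For every n ≥ 1 and every j < 2^n, every minimal puncturing bit pattern for j has cardinality 2^{d_H(j)}: if Q ∈ ψ_j then |Q| = 2^{d_H(j)}, where d_H(j) is the number of ones in the binary representation of j. -/
import Mathlib


/-- Binary domination: every binary digit of `i` is at most the corresponding digit of `j`. -/
def bdom (i j : ℕ) : Prop := ∀ t, i.testBit t = true → j.testBit t = true

instance (i j : ℕ) : Decidable (bdom i j) :=
  decidable_of_iff (i ||| j = j) (by
    constructor
    · intro h t hi
      have h1 : (i ||| j).testBit t = j.testBit t := by rw [h]
      rw [Nat.testBit_or, hi, Bool.true_or] at h1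
      exact h1.symm
    · intro h
      apply Nat.eq_of_testBit_eq
      intro t
      rw [Nat.testBit_or]
      cases hi : i.testBit t with
      | true => simp [h t hi]
      | false => simp)

/-- One step of zero-LLR propagation, computing the stage-`t` zero-LLR set from the
stage-`t+1` zero-LLR set `S`, for a polar code of length `2^n`. -/
def zstep (n t : ℕ) (S : Finset ℕ) : Finset ℕ :=
  (Finset.range (2 ^ n)).filter fun i =>
    if i.testBit t then i ∈ S ∧ i - 2 ^ t ∈ S else i ∈ S ∨ i + 2 ^ t ∈ S

/-- Zero-LLR set at stage `t` for puncturing set `X`, for a polar code of length `2^n`: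
`Zstage n X n = X` and `Zstage n X t = zstep n t (Zstage n X (t+1))` for `t < n`. -/
def Zstage (n : ℕ) (X : Finset ℕ) (t : ℕ) : Finset ℕ :=
  if _h : n ≤ t then X else zstep n t (Zstage n X (t + 1))
termination_by n - t
decreasing_by omega

/-- The incapable set resulting from puncturing set `X`. -/
def Up (n : ℕ) (X : Finset ℕ) : Finset ℕ := Zstage n X 0

/-- `psi n j Q`: `Q` is a minimal puncturing bit pattern making bit `j` incapable. -/
def psi (n j : ℕ) (Q : Finset ℕ) : Prop :=
  Q ⊆ Finset.range (2 ^ n) ∧ j ∈ Up n Q ∧ ∀ Q' ⊂ Q, j ∉ Up n Q'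

/-- Binary Hamming weight: the number of ones in the binary representation. -/
def hamw (j : ℕ) : ℕ := (Nat.bits j).count true


-- Auxiliary lemmas --

theorem Zstage_le {n t : ℕ} (X : Finset ℕ) (h : n ≤ t) : Zstage n X t = X := by
  rw [Zstage]; simp [h]

theorem Zstage_lt {n t : ℕ} (X : Finset ℕ) (h : t < n) :
    Zstage n X t = zstep n t (Zstage n X (t + 1)) := by
  rw [Zstage]; simp [Nat.not_le.mpr h]

theorem mem_zstep {n t i : ℕ} {S : Finset ℕ} :
    i ∈ zstep n t S ↔ i < 2 ^ n ∧
      (if i.testBit t then i ∈ S ∧ i - 2 ^ t ∈ S else i ∈ S ∨ i + 2 ^ t ∈ S) := by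
  simp [zstep, Finset.mem_filter]

theorem xor_pow_add {i t : ℕ} (h : i.testBit t = false) : i ^^^ 2 ^ t = i + 2 ^ t := by
  induction t generalizing i with
  | zero =>
    have h0 : i % 2 = 0 := by simpa using h
    have h1 : (i ^^^ 1) % 2 = (i + 1) % 2 := Nat.xor_mod_two_eq
    have h2 : (i ^^^ 1) / 2 = i / 2 := by rw [Nat.xor_div_two]; simp
    have d1 := Nat.div_add_mod (i ^^^ 1) 2
    have d2 := Nat.div_add_mod i 2
    simpa using by omega
  | succ t ih =>
    rw [Nat.testBit_add_one] at h
    have ih' := ih h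
    have hp : 2 ^ (t + 1) = 2 * 2 ^ t := by ring
    have e1 : (i ^^^ 2 ^ (t + 1)) % 2 = (i + 2 ^ (t + 1)) % 2 := Nat.xor_mod_two_eq
    have e2 : (i ^^^ 2 ^ (t + 1)) / 2 = i / 2 + 2 ^ t := by
      rw [Nat.xor_div_two]
      have : 2 ^ (t + 1) / 2 = 2 ^ t := by omega
      rw [this, ih']
    have d1 := Nat.div_add_mod (i ^^^ 2 ^ (t + 1)) 2
    have d2 := Nat.div_add_mod i 2
    omega

theorem xor_pow_sub {i t : ℕ} (h : i.testBit t = true) : i ^^^ 2 ^ t = i - 2 ^ t := by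
  have hb : (i ^^^ 2 ^ t).testBit t = false := by
    simp [Nat.testBit_xor, h, Nat.testBit_two_pow]
  have h2 := xor_pow_add hb
  rw [Nat.xor_assoc, Nat.xor_self, Nat.xor_zero] at h2
  omega

theorem testBit_xor_pow {i t s : ℕ} (h : s ≠ t) : (i ^^^ 2 ^ t).testBit s = i.testBit s := by
  simp [Nat.testBit_xor, Nat.testBit_two_pow_of_ne (Ne.symm h)]

def wstep (t : ℕ) (Z R : Finset ℕ) : Finset ℕ :=
  (R.image fun i => if i.testBit t then i else if i ∈ Z then i else i ^^^ 2 ^ t) ∪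
    (R.filter fun i => i.testBit t).image fun i => i ^^^ 2 ^ t

def Wit (n j : ℕ) (Q : Finset ℕ) : ℕ → Finset ℕ
  | 0 => {j}
  | t + 1 => wstep t (Zstage n Q (t + 1)) (Wit n j Q t)

theorem Wit_zero {n j : ℕ} {Q : Finset ℕ} : Wit n j Q 0 = {j} := rfl

theorem Wit_succ {n j t : ℕ} {Q : Finset ℕ} :
    Wit n j Q (t + 1) = wstep t (Zstage n Q (t + 1)) (Wit n j Q t) := rfl

theorem mem_wstep {t x : ℕ} {Z R : Finset ℕ} :
    x ∈ wstep t Z R ↔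
      (∃ i ∈ R, (if i.testBit t then i else if i ∈ Z then i else i ^^^ 2 ^ t) = x) ∨
        (∃ i ∈ R, i.testBit t = true ∧ i ^^^ 2 ^ t = x) := by
  simp [wstep, Finset.mem_union, Finset.mem_image, Finset.mem_filter, and_assoc]

theorem Wit_agree {n j : ℕ} {Q : Finset ℕ} (t : ℕ) :
    ∀ i ∈ Wit n j Q t, ∀ s, t ≤ s → i.testBit s = j.testBit s := by
  induction t with
  | zero => intro i hi s _; simp only [Wit_zero, Finset.mem_singleton] at hi; subst hi; rfl
  | succ t ih =>
    intro x hx s hs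
    have hst : s ≠ t := by omega
    rw [Wit_succ, mem_wstep] at hx
    rcases hx with ⟨i, hi, rfl⟩ | ⟨i, hi, _, rfl⟩
    · have h := ih i hi s (by omega)
      split
      · exact h
      · split
        · exact h
        · rw [testBit_xor_pow hst]; exact h
    · rw [testBit_xor_pow hst]; exact ih i hi s (by omega)

theorem Wit_lt {n j : ℕ} {Q : Finset ℕ} (hj : j < 2 ^ n) :
    ∀ t, t ≤ n → ∀ i ∈ Wit n j Q t, i < 2 ^ n := by
  intro t
  induction t with
  | zero => intro _ i hi; simp only [Wit_zero, Finset.mem_singleton] at hi; omega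
  | succ t ih =>
    intro ht x hx
    have hpt : 2 ^ t < 2 ^ n := Nat.pow_lt_pow_right one_lt_two (by omega)
    rw [Wit_succ, mem_wstep] at hx
    rcases hx with ⟨i, hi, rfl⟩ | ⟨i, hi, _, rfl⟩
    · have h := ih (by omega) i hi
      split
      · exact h
      · split
        · exact h
        · exact Nat.xor_lt_two_pow h hpt
    · exact Nat.xor_lt_two_pow (ih (by omega) i hi) hpt

def wcount (j t : ℕ) : ℕ := ∑ s ∈ Finset.range t, (if j.testBit s then 1 else 0)

theorem wcount_succ (j t : ℕ) :
    wcount j (t + 1) = wcount j t + (if j.testBit t then 1 else 0) :=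
  Finset.sum_range_succ _ t

theorem Wit_card {n j : ℕ} {Q : Finset ℕ} (t : ℕ) :
    (Wit n j Q t).card = 2 ^ wcount j t := by
  induction t with
  | zero => simp [Wit_zero, wcount]
  | succ t ih =>
    have hbit : ∀ i ∈ Wit n j Q t, i.testBit t = j.testBit t :=
      fun i hi => Wit_agree t i hi t le_rfl
    rw [Wit_succ, wstep, wcount_succ]
    cases hb : j.testBit t with
    | false =>
      have hfilt : (Wit n j Q t).filter (fun i => i.testBit t) = ∅ := by
        rw [Finset.filter_eq_empty_iff]; intro i hi; simp [hbit i hi, hb]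
      rw [hfilt, Finset.image_empty, Finset.union_empty]
      rw [Finset.card_image_of_injOn, ih]
      · simp
      · intro a ha b hbm hab
        have hba : a.testBit t = false := (hbit a ha).trans hb
        have hbb : b.testBit t = false := (hbit b hbm).trans hb
        simp only [hba, hbb, Bool.false_eq_true, if_false] at hab
        apply Nat.eq_of_testBit_eq
        intro s
        rcases eq_or_ne s t with rfl | hst
        · rw [hba, hbb]
        · have e1 : (if a ∈ Zstage n Q (t + 1) then a else a ^^^ 2 ^ t).testBit s
              = a.testBit s := by
            split
            · rfl
            · exact testBit_xor_pow hst
          have e2 : (if b ∈ Zstage n Q (t + 1) then b else b ^^^ 2 ^ t).testBit s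
              = b.testBit s := by
            split
            · rfl
            · exact testBit_xor_pow hst
          rw [← e1, hab, e2]
    | true =>
      have h1 : (Wit n j Q t).image
          (fun i => if i.testBit t then i else if i ∈ Zstage n Q (t + 1) then i else i ^^^ 2 ^ t)
          = Wit n j Q t := by
        rw [Finset.image_congr (g := id) (fun i hi => by simp [(hbit i hi).trans hb]),
          Finset.image_id]
      have hfilt : (Wit n j Q t).filter (fun i => i.testBit t) = Wit n j Q t := by
        rw [Finset.filter_eq_self]; intro i hi; simp [hbit i hi, hb]
      rw [h1, hfilt]
      have hinj : Function.Injective (fun i : ℕ => i ^^^ 2 ^ t) := by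
        intro a b h
        have := congrArg (fun x => x ^^^ 2 ^ t) h
        simpa [Nat.xor_assoc] using this
      have hdisj : Disjoint (Wit n j Q t) ((Wit n j Q t).image fun i => i ^^^ 2 ^ t) := by
        rw [Finset.disjoint_left]
        intro a ha hmem
        rcases Finset.mem_image.mp hmem with ⟨i, hi, rfl⟩
        have h1 : (i ^^^ 2 ^ t).testBit t = j.testBit t := hbit _ ha
        have h2 : i.testBit t = j.testBit t := hbit i hi
        rw [hb] at h1 h2
        simp [Nat.testBit_xor, h2, Nat.testBit_two_pow] at h1
      rw [Finset.card_union_of_disjoint hdisj, Finset.card_image_of_injective _ hinj, ih]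
      simp [pow_succ]
      ring

theorem Wit_sub_Z {n j : ℕ} {Q : Finset ℕ} (hj0 : j ∈ Zstage n Q 0) :
    ∀ t, t ≤ n → Wit n j Q t ⊆ Zstage n Q t := by
  intro t
  induction t with
  | zero => intro _ i hi; simp only [Wit_zero, Finset.mem_singleton] at hi; subst hi; exact hj0
  | succ t ih =>
    intro ht x hx
    have h1 := ih (by omega)
    rw [Wit_succ, mem_wstep] at hx
    rcases hx with ⟨i, hi, rfl⟩ | ⟨i, hi, hbt, rfl⟩
    · have hz : i ∈ zstep n t (Zstage n Q (t + 1)) := by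
        rw [← Zstage_lt Q (by omega)]; exact h1 hi
      rw [mem_zstep] at hz
      cases hb : i.testBit t with
      | true =>
        rw [hb, if_pos rfl] at hz
        rw [if_pos rfl]
        exact hz.2.1
      | false =>
        rw [hb, if_neg Bool.false_ne_true] at hz
        rw [if_neg Bool.false_ne_true]
        split
        · assumption
        · rw [xor_pow_add hb]
          rcases hz.2 with h | h
          · exact absurd h (by assumption)
          · exact h
    · have hz : i ∈ zstep n t (Zstage n Q (t + 1)) := by
        rw [← Zstage_lt Q (by omega)]; exact h1 hi
      rw [mem_zstep] at hz
      rw [hbt, if_pos rfl] at hz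
      rw [xor_pow_sub hbt]
      exact hz.2.2

theorem Wit_forward {n j : ℕ} {Q : Finset ℕ} (hj : j < 2 ^ n) :
    ∀ k t, t + k = n → Wit n j Q t ⊆ Zstage n (Wit n j Q n) t := by
  intro k
  induction k with
  | zero =>
    intro t ht
    have : t = n := by omega
    subst this
    rw [Zstage_le _ le_rfl]
  | succ k ih =>
    intro t ht x hx
    have ih' := ih (t + 1) (by omega)
    rw [Zstage_lt _ (by omega), mem_zstep]
    refine ⟨Wit_lt hj t (by omega) x hx, ?_⟩
    cases hb : x.testBit t with
    | true =>
      rw [if_pos rfl]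
      constructor
      · apply ih'
        rw [Wit_succ, mem_wstep]
        exact Or.inl ⟨x, hx, by simp [hb]⟩
      · rw [← xor_pow_sub hb]
        apply ih'
        rw [Wit_succ, mem_wstep]
        exact Or.inr ⟨x, hx, hb, rfl⟩
    | false =>
      rw [if_neg Bool.false_ne_true]
      by_cases hz : x ∈ Zstage n Q (t + 1)
      · left
        apply ih'
        rw [Wit_succ, mem_wstep]
        exact Or.inl ⟨x, hx, by simp [hb, hz]⟩
      · right
        rw [← xor_pow_add hb]
        apply ih'
        rw [Wit_succ, mem_wstep]
        exact Or.inl ⟨x, hx, by simp [hb, hz]⟩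

theorem wcount_succ' (j t : ℕ) :
    wcount j (t + 1) = wcount (j / 2) t + (if j.testBit 0 then 1 else 0) := by
  rw [wcount, Finset.sum_range_succ']
  congr 1
  exact Finset.sum_congr rfl fun s _ => by rw [Nat.testBit_add_one]

theorem hamw_zero : hamw 0 = 0 := by simp [hamw]

theorem hamw_rec (j : ℕ) (h : j ≠ 0) : hamw j = hamw (j / 2) + j % 2 := by
  rcases Nat.even_or_odd j with he | ho
  · obtain ⟨k, hk⟩ := he
    have hk2 : j = 2 * k := by omega
    have hkne : k ≠ 0 := by omega
    subst hk2
    rw [hamw, Nat.bit0_bits k hkne]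
    simp [hamw, List.count_cons, Nat.mul_div_cancel_left _ (by norm_num : 0 < 2), Nat.mul_mod_right]
  · obtain ⟨k, hk⟩ := ho
    subst hk
    rw [hamw, Nat.bit1_bits k]
    have : (2 * k + 1) / 2 = k := by omega
    have h2 : (2 * k + 1) % 2 = 1 := by omega
    simp [hamw, List.count_cons, this, h2]

theorem wcount_eq_hamw : ∀ m j, j < 2 ^ m → wcount j m = hamw j := by
  intro m
  induction m with
  | zero =>
    intro j hj
    interval_cases j
    simp [wcount, hamw_zero]
  | succ m ih =>
    intro j hj
    rcases eq_or_ne j 0 with rfl | hne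
    · simp [wcount, hamw_zero, Nat.zero_testBit]
    · have hp : (2:ℕ) ^ (m + 1) = 2 * 2 ^ m := by ring
      rw [wcount_succ', ih (j / 2) (by omega), hamw_rec j hne, Nat.testBit_zero]
      rcases Nat.even_or_odd j with he | ho
      · obtain ⟨k, hk⟩ := he
        have : j % 2 = 0 := by omega
        simp [this]
      · obtain ⟨k, hk⟩ := ho
        have : j % 2 = 1 := by omega
        simp [this]

/-- every minimal puncturing bit pattern for `j` has cardinality
`2^{d_H(j)}`. -/
theorem minimal_pattern_card (n : ℕ) (hn : 1 ≤ n) (j : ℕ) (hj : j < 2 ^ n)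
    (Q : Finset ℕ) (hQ : psi n j Q) :
    Q.card = 2 ^ hamw j := by
  obtain ⟨hQr, hjU, hmin⟩ := hQ
  have hWQ : Wit n j Q n ⊆ Q := by
    have h := Wit_sub_Z hjU n le_rfl
    rwa [Zstage_le Q le_rfl] at h
  have hjW : j ∈ Up n (Wit n j Q n) := by
    have h := Wit_forward (Q := Q) hj n 0 (by omega)
    exact h (by rw [Wit_zero]; exact Finset.mem_singleton_self j)
  have heq : Wit n j Q n = Q := by
    by_contra hne
    exact hmin (Wit n j Q n) (Finset.ssubset_iff_subset_ne.mpr ⟨hWQ, hne⟩) hjW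
  have hcard := Wit_card (n := n) (j := j) (Q := Q) n
  rw [heq] at hcard
  rw [hcard, wcount_eq_hamw n j hj]
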